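/- Let l ≥ 3 and n₁,…,n_l ≥ 1, with G' = S_{n₁+⋯+n_l} and M' = S_{n₁} × ⋯ × S_{n_l}. Then the convolution algebra of Ad(M')-invariant complex-valued functions on G' is not commutative; specifically, the characteristic functions of the M'-conjugacy classes of the transpositions σ₁ = (1, n₁+1) and σ₂ = (n₁+1, n₁+n₂+1) do not commute under convolution. Consequently (G', M') is not a strong Gelfand pair. -/

import Mathlib

open scoped BigOperators

/-- Convolution of complex-valued functions on a finite group. -/
noncomputable def convol {G : Type*} [Group G] [Fintype G] (f g : G → ℂ) : G → ℂ :=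
  fun x => ∑ y : G, f y * g (y⁻¹ * x)

set_option linter.unusedSectionVars false


section Aux
variable {α ι : Type*} [DecidableEq α] {blk : α → ι}

lemma bp_mul {m m' : Equiv.Perm α} (h : ∀ p, blk (m p) = blk p)
    (h' : ∀ p, blk (m' p) = blk p) : ∀ p, blk ((m * m') p) = blk p := by
  intro p; rw [Equiv.Perm.mul_apply, h, h']

lemma bp_inv {m : Equiv.Perm α} (h : ∀ p, blk (m p) = blk p) :
    ∀ p, blk (m⁻¹ p) = blk p := by
  intro p; conv_rhs => rw [← (show m (m⁻¹ p) = p from Equiv.apply_symm_apply m p)]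
  rw [h]

lemma bp_swap {u v : α} (h : blk u = blk v) :
    ∀ p, blk ((Equiv.swap u v) p) = blk p := by
  intro p
  rcases eq_or_ne p u with rfl | hpu
  · rw [Equiv.swap_apply_left]; exact h.symm
  rcases eq_or_ne p v with rfl | hpv
  · rw [Equiv.swap_apply_right]; exact h
  · rw [Equiv.swap_apply_of_ne_of_ne hpu hpv]

lemma class_iff {u v : α} (huv : blk u ≠ blk v) (x : Equiv.Perm α) :
    (∃ m : Equiv.Perm α, (∀ p, blk (m p) = blk p) ∧ m * Equiv.swap u v * m⁻¹ = x)
    ↔ ∃ u' v', blk u' = blk u ∧ blk v' = blk v ∧ x = Equiv.swap u' v' := by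
  constructor
  · rintro ⟨m, hm, rfl⟩
    exact ⟨m u, m v, hm u, hm v, (Equiv.swap_apply_apply m u v).symm⟩
  · rintro ⟨u', v', hu', hv', rfl⟩
    have huv' : u ≠ v' := fun h => huv (by rw [h, hv'])
    have huuv : u ≠ v := fun h => huv (by rw [h])
    have hv'u' : v' ≠ u' := fun h => huv (by rw [← hu', ← h, hv'])
    refine ⟨Equiv.swap u u' * Equiv.swap v v', bp_mul (bp_swap hu'.symm) (bp_swap hv'.symm), ?_⟩
    rw [← Equiv.swap_apply_apply]
    congr 1
    · rw [Equiv.Perm.mul_apply, Equiv.swap_apply_of_ne_of_ne huuv huv',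
        Equiv.swap_apply_left]
    · rw [Equiv.Perm.mul_apply, Equiv.swap_apply_left,
        Equiv.swap_apply_of_ne_of_ne (fun h => huv (by rw [← h, hv'])) hv'u']

lemma key1 {a b c u v u' v' : α}
    (hab : a ≠ b) (hbc : b ≠ c) (hac : a ≠ c)
    (hcu : c ≠ u) (hcv : c ≠ v) (hcu' : c ≠ u') (hu'u : u' ≠ u) (hu'a : u' ≠ a)
    (heq : Equiv.swap u v * Equiv.swap u' v' = Equiv.swap a b * Equiv.swap b c) :
    u = a ∧ v = b := by
  have hc : (Equiv.swap u v) ((Equiv.swap u' v') c) = a := by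
    have := congrArg (fun σ : Equiv.Perm α => σ c) heq
    simpa [Equiv.Perm.mul_apply, Equiv.swap_apply_right] using this
  rcases eq_or_ne c v' with hcv' | hcv'
  · subst hcv'
    rw [Equiv.swap_apply_right] at hc
    rcases eq_or_ne u' v with hu'v | hu'v
    · subst hu'v
      rw [Equiv.swap_apply_right] at hc
      have hb : (Equiv.swap u u') ((Equiv.swap u' c) b) = c := by
        have := congrArg (fun σ : Equiv.Perm α => σ b) heq
        simpa [Equiv.Perm.mul_apply, Equiv.swap_apply_left,
          Equiv.swap_apply_of_ne_of_ne (Ne.symm hac) (Ne.symm hbc)] using this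
      rcases eq_or_ne b u' with hbv | hbv
      · exact ⟨hc, hbv.symm⟩
      · rw [Equiv.swap_apply_of_ne_of_ne hbv hbc, hc,
          Equiv.swap_apply_of_ne_of_ne (Ne.symm hab) hbv] at hb
        exact absurd hb hbc
    · rw [Equiv.swap_apply_of_ne_of_ne hu'u hu'v] at hc
      exact absurd hc hu'a
  · rw [Equiv.swap_apply_of_ne_of_ne hcu' hcv',
      Equiv.swap_apply_of_ne_of_ne hcu hcv] at hc
    exact absurd hc (Ne.symm hac)

lemma key2 {a b c u v u' v' : α}
    (hac : a ≠ c) (hcu : c ≠ u) (hcu' : c ≠ u') (hcv' : c ≠ v') (hua : u ≠ a)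
    (heq : Equiv.swap u v * Equiv.swap u' v' = Equiv.swap a b * Equiv.swap b c) :
    False := by
  have hc : (Equiv.swap u v) ((Equiv.swap u' v') c) = a := by
    have := congrArg (fun σ : Equiv.Perm α => σ c) heq
    simpa [Equiv.Perm.mul_apply, Equiv.swap_apply_right] using this
  rw [Equiv.swap_apply_of_ne_of_ne hcu' hcv'] at hc
  rcases eq_or_ne c v with hcv | hcv
  · subst hcv
    rw [Equiv.swap_apply_right] at hc
    exact hua hc
  · rw [Equiv.swap_apply_of_ne_of_ne hcu hcv] at hc
    exact (Ne.symm hac) hc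

end Aux


lemma main_aux {α ι : Type*} [DecidableEq α] [Fintype α] {blk : α → ι} {a b c : α}
    (hab : blk a ≠ blk b) (hbc : blk b ≠ blk c) (hac : blk a ≠ blk c) :
    (Set.indicator
        {x : Equiv.Perm α | ∃ m : Equiv.Perm α,
            (∀ p, blk (m p) = blk p) ∧ m * Equiv.swap a b * m⁻¹ = x}
        (fun _ => (1 : ℂ)) ≠ 0) ∧
    (∀ m : Equiv.Perm α, (∀ p, blk (m p) = blk p) →
      ∀ x, Set.indicator
        {x : Equiv.Perm α | ∃ m' : Equiv.Perm α,
            (∀ p, blk (m' p) = blk p) ∧ m' * Equiv.swap a b * m'⁻¹ = x}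
        (fun _ => (1 : ℂ)) (m * x * m⁻¹)
      = Set.indicator
        {x : Equiv.Perm α | ∃ m' : Equiv.Perm α,
            (∀ p, blk (m' p) = blk p) ∧ m' * Equiv.swap a b * m'⁻¹ = x}
        (fun _ => (1 : ℂ)) x) ∧
    convol
      (Set.indicator
        {x : Equiv.Perm α | ∃ m : Equiv.Perm α,
            (∀ p, blk (m p) = blk p) ∧ m * Equiv.swap a b * m⁻¹ = x}
        (fun _ => (1 : ℂ)))
      (Set.indicator
        {x : Equiv.Perm α | ∃ m : Equiv.Perm α,
            (∀ p, blk (m p) = blk p) ∧ m * Equiv.swap b c * m⁻¹ = x}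
        (fun _ => (1 : ℂ)))
    ≠
    convol
      (Set.indicator
        {x : Equiv.Perm α | ∃ m : Equiv.Perm α,
            (∀ p, blk (m p) = blk p) ∧ m * Equiv.swap b c * m⁻¹ = x}
        (fun _ => (1 : ℂ)))
      (Set.indicator
        {x : Equiv.Perm α | ∃ m : Equiv.Perm α,
            (∀ p, blk (m p) = blk p) ∧ m * Equiv.swap a b * m⁻¹ = x}
        (fun _ => (1 : ℂ))) := by
  classical
  set S₁ : Set (Equiv.Perm α) :=
    {x | ∃ m : Equiv.Perm α, (∀ p, blk (m p) = blk p) ∧ m * Equiv.swap a b * m⁻¹ = x} with hS₁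
  set S₂ : Set (Equiv.Perm α) :=
    {x | ∃ m : Equiv.Perm α, (∀ p, blk (m p) = blk p) ∧ m * Equiv.swap b c * m⁻¹ = x} with hS₂
  have neblk : ∀ {p q : α}, blk p ≠ blk q → p ≠ q :=
    fun h hpq => h (congrArg blk hpq)
  have hmem1 : Equiv.swap a b ∈ S₁ := ⟨1, fun p => rfl, by group⟩
  have hmem2 : Equiv.swap b c ∈ S₂ := ⟨1, fun p => rfl, by group⟩
  refine ⟨?_, ?_, ?_⟩
  · -- nonzero
    intro h
    have h0 := congrFun h (Equiv.swap a b)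
    rw [Set.indicator_of_mem hmem1] at h0
    have h0' : (1 : ℂ) = 0 := by simpa using h0
    exact one_ne_zero h0'
  · -- invariance
    have inv_mem : ∀ m : Equiv.Perm α, (∀ p, blk (m p) = blk p) →
        ∀ x, x ∈ S₁ → m * x * m⁻¹ ∈ S₁ := by
      rintro m hm x ⟨m', hm', rfl⟩
      exact ⟨m * m', bp_mul hm hm', by group⟩
    intro m hm x
    by_cases hx : x ∈ S₁
    · rw [Set.indicator_of_mem (inv_mem m hm x hx), Set.indicator_of_mem hx]
    · rw [Set.indicator_of_notMem hx, Set.indicator_of_notMem]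
      intro hmem
      apply hx
      have h1 := inv_mem m⁻¹ (bp_inv hm) _ hmem
      have h2 : m⁻¹ * (m * x * m⁻¹) * m⁻¹⁻¹ = x := by group
      rwa [h2] at h1
  · -- noncommutative
    intro heqfun
    set x₀ : Equiv.Perm α := Equiv.swap a b * Equiv.swap b c with hx₀
    have hL : convol (Set.indicator S₁ (fun _ => (1:ℂ)))
        (Set.indicator S₂ (fun _ => (1:ℂ))) x₀ = 1 := by
      show (∑ y : Equiv.Perm α, Set.indicator S₁ (fun _ => (1:ℂ)) y *
        Set.indicator S₂ (fun _ => (1:ℂ)) (y⁻¹ * x₀)) = 1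
      rw [Finset.sum_eq_single_of_mem (Equiv.swap a b) (Finset.mem_univ _)]
      · have h2 : (Equiv.swap a b)⁻¹ * x₀ = Equiv.swap b c := by
          rw [hx₀]; group
        rw [h2, Set.indicator_of_mem hmem1, Set.indicator_of_mem hmem2, one_mul]
      · intro y _ hy
        by_cases h1 : y ∈ S₁
        · by_cases h2 : y⁻¹ * x₀ ∈ S₂
          · exfalso
            obtain ⟨u, v, hu, hv, hyuv⟩ := (class_iff hab y).mp h1
            obtain ⟨u', v', hu', hv', hyuv'⟩ := (class_iff hbc (y⁻¹ * x₀)).mp h2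
            have heq : Equiv.swap u v * Equiv.swap u' v' =
                Equiv.swap a b * Equiv.swap b c := by
              rw [← hyuv, ← hyuv', ← hx₀]
              group
            have hres := key1 (neblk hab) (neblk hbc) (neblk hac)
              (neblk (by rw [hu]; exact Ne.symm hac))
              (neblk (by rw [hv]; exact Ne.symm hbc))
              (neblk (by rw [hu']; exact Ne.symm hbc))
              (neblk (by rw [hu', hu]; exact Ne.symm hab))
              (neblk (by rw [hu']; exact Ne.symm hab))
              heq
            exact hy (by rw [hyuv, hres.1, hres.2])
          · rw [Set.indicator_of_notMem h2, mul_zero]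
        · rw [Set.indicator_of_notMem h1, zero_mul]
    have hR : convol (Set.indicator S₂ (fun _ => (1:ℂ)))
        (Set.indicator S₁ (fun _ => (1:ℂ))) x₀ = 0 := by
      show (∑ y : Equiv.Perm α, Set.indicator S₂ (fun _ => (1:ℂ)) y *
        Set.indicator S₁ (fun _ => (1:ℂ)) (y⁻¹ * x₀)) = 0
      apply Finset.sum_eq_zero
      intro y _
      by_cases h1 : y ∈ S₂
      · by_cases h2 : y⁻¹ * x₀ ∈ S₁
        · exfalso
          obtain ⟨u, v, hu, hv, hyuv⟩ := (class_iff hbc y).mp h1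
          obtain ⟨u', v', hu', hv', hyuv'⟩ := (class_iff hab (y⁻¹ * x₀)).mp h2
          have heq : Equiv.swap u v * Equiv.swap u' v' =
              Equiv.swap a b * Equiv.swap b c := by
            rw [← hyuv, ← hyuv', ← hx₀]
            group
          have hua : u ≠ a := neblk (by rw [hu]; exact Ne.symm hab)
          exact key2 (neblk hac)
            (neblk (by rw [hu]; exact Ne.symm hbc))
            (neblk (by rw [hu']; exact Ne.symm hac))
            (neblk (by rw [hv']; exact Ne.symm hbc))
            hua heq
        · rw [Set.indicator_of_notMem h2, mul_zero]
      · rw [Set.indicator_of_notMem h1, zero_mul]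
    have hfin := congrFun heqfun x₀
    rw [hL, hR] at hfin
    exact one_ne_zero hfin


/-- For `l ≥ 3` blocks, the convolution algebra of `Ad(M')`-invariant functions on
`G' = S_{n₁+⋯+n_l}`, where `M' = S_{n₁} × ⋯ × S_{n_l}` is the block subgroup, is not
commutative: the characteristic functions of the `M'`-conjugacy classes of the
transpositions `σ₁ = (a b)` and `σ₂ = (b c)` (with `a, b, c` in three distinct
blocks) are `Ad(M')`-invariant but do not commute under convolution.
Consequently `(G', M')` is not a strong Gelfand pair. -/
theorem blocks_not_strong_gelfand
    (l : ℕ) (hl : 3 ≤ l) (n : Fin l → ℕ) (hn : ∀ i, 1 ≤ n i)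
    (a b c : (i : Fin l) × Fin (n i))
    (hab : a.1 ≠ b.1) (hbc : b.1 ≠ c.1) (hac : a.1 ≠ c.1) :
    -- `f₁`, `f₂` are the characteristic functions of the `M'`-conjugacy classes of
    -- the transpositions `(a b)` and `(b c)`.
    (Set.indicator
        {x : Equiv.Perm ((i : Fin l) × Fin (n i)) |
          ∃ m : Equiv.Perm ((i : Fin l) × Fin (n i)),
            (∀ p, (m p).1 = p.1) ∧ m * Equiv.swap a b * m⁻¹ = x}
        (fun _ => (1 : ℂ)) ≠ 0) ∧
    -- they are `Ad(M')`-invariant, and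
    (∀ m : Equiv.Perm ((i : Fin l) × Fin (n i)), (∀ p, (m p).1 = p.1) →
      ∀ x, Set.indicator
        {x : Equiv.Perm ((i : Fin l) × Fin (n i)) |
          ∃ m' : Equiv.Perm ((i : Fin l) × Fin (n i)),
            (∀ p, (m' p).1 = p.1) ∧ m' * Equiv.swap a b * m'⁻¹ = x}
        (fun _ => (1 : ℂ)) (m * x * m⁻¹)
      = Set.indicator
        {x : Equiv.Perm ((i : Fin l) × Fin (n i)) |
          ∃ m' : Equiv.Perm ((i : Fin l) × Fin (n i)),
            (∀ p, (m' p).1 = p.1) ∧ m' * Equiv.swap a b * m'⁻¹ = x}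
        (fun _ => (1 : ℂ)) x) ∧
    -- they do not commute under convolution.
    convol
      (Set.indicator
        {x : Equiv.Perm ((i : Fin l) × Fin (n i)) |
          ∃ m : Equiv.Perm ((i : Fin l) × Fin (n i)),
            (∀ p, (m p).1 = p.1) ∧ m * Equiv.swap a b * m⁻¹ = x}
        (fun _ => (1 : ℂ)))
      (Set.indicator
        {x : Equiv.Perm ((i : Fin l) × Fin (n i)) |
          ∃ m : Equiv.Perm ((i : Fin l) × Fin (n i)),
            (∀ p, (m p).1 = p.1) ∧ m * Equiv.swap b c * m⁻¹ = x}
        (fun _ => (1 : ℂ)))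
    ≠
    convol
      (Set.indicator
        {x : Equiv.Perm ((i : Fin l) × Fin (n i)) |
          ∃ m : Equiv.Perm ((i : Fin l) × Fin (n i)),
            (∀ p, (m p).1 = p.1) ∧ m * Equiv.swap b c * m⁻¹ = x}
        (fun _ => (1 : ℂ)))
      (Set.indicator
        {x : Equiv.Perm ((i : Fin l) × Fin (n i)) |
          ∃ m : Equiv.Perm ((i : Fin l) × Fin (n i)),
            (∀ p, (m p).1 = p.1) ∧ m * Equiv.swap a b * m⁻¹ = x}
        (fun _ => (1 : ℂ))) := by
  exact main_aux (blk := Sigma.fst) hab hbc hac
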